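/- The map φ decomposes L(3,n) into saturated chains starting in S_{3,n} and ending in E_{3,n}, of two types: (i) for every integer k ≥ 0 with 4k ≤ n, the iterates φ^j((4k,2k,0)) for 0 ≤ j < 3(n−4k) all lie in L(3,n) \ E_{3,n}, and φ^{3(n−4k)}((4k,2k,0)) = (n, n−2k, n−4k) ∈ E_{3,n}; (ii) for all integers k ≥ 0 and ℓ ≥ 2 with 4k+ℓ ≤ n and 2(6k+ℓ) ≤ 3n, the iterates φ^j((4k+ℓ,2k,0)) for 0 ≤ j < 2(n−4k−1) all lie in L(3,n) \ E_{3,n}, and φ^{2(n−4k−1)}((4k+ℓ,2k,0)) = (n, n−2k, ℓ−2) ∈ E_{3,n}. -/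
import Mathlib


/-- Membership in the poset `L(3,n)`: triples `(p₁,p₂,p₃)` with `n ≥ p₁ ≥ p₂ ≥ p₃ ≥ 0`. -/
def L3 (n : ℤ) : Set (ℤ × ℤ × ℤ) :=
  {p | p.1 ≤ n ∧ p.2.1 ≤ p.1 ∧ p.2.2 ≤ p.2.1 ∧ 0 ≤ p.2.2}

/-- The starting set `S_{3,m}`. -/
def S3 (m : ℤ) : Set (ℤ × ℤ × ℤ) :=
  {p | ∃ k ℓ : ℤ, 0 ≤ k ∧ 0 ≤ ℓ ∧ ℓ ≠ 1 ∧ 4 * k + ℓ ≤ m ∧ 2 * (6 * k + ℓ) ≤ 3 * m ∧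
    p = (4 * k + ℓ, 2 * k, 0)}

/-- The dual of a partition in `L(3,m)`. -/
def dual (m : ℤ) (p : ℤ × ℤ × ℤ) : ℤ × ℤ × ℤ :=
  (m - p.2.2, m - p.2.1, m - p.1)

/-- The end set `E_{3,m} = {λ* : λ ∈ S_{3,m}}`. -/
def E3 (m : ℤ) : Set (ℤ × ℤ × ℤ) := dual m '' S3 m

open Classical in
/-- The order matching `φ`. -/
noncomputable def phi (p : ℤ × ℤ × ℤ) : ℤ × ℤ × ℤ :=
  if p ∈ E3 p.1 then
    (p.1 + 1, p.2.1, p.2.2)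
  else if (Even (p.2.1 + p.2.2) ∧ (p.1 - 1, p.2.1 + 1, p.2.2) ∉ E3 (p.1 - 1)) ∨
      (¬ Even (p.2.1 + p.2.2) ∧ (p.1 - 1, p.2.1, p.2.2 + 1) ∈ E3 (p.1 - 1)) then
    (p.1, p.2.1 + 1, p.2.2)
  else
    (p.1, p.2.1, p.2.2 + 1)

/-- Arithmetic characterization of membership in `E3 m`. -/
lemma mem_E3_iff (m a b c : ℤ) : (a, b, c) ∈ E3 m ↔
    a = m ∧ b ≤ m ∧ (m - b) % 2 = 0 ∧ 0 ≤ c ∧ m + c ≤ 2 * b ∧ 2 * b - m - c ≠ 1 ∧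
      m ≤ 2 * (b + c) := by
  constructor
  · rintro ⟨q, ⟨k, ℓ, hk, hℓ, hℓ1, h4, h5, rfl⟩, h⟩
    simp [dual, Prod.ext_iff] at h
    omega
  · rintro ⟨rfl, h2, h3, h4, h5, h6, h7⟩
    refine ⟨(4 * ((a - b) / 2) + (2 * b - a - c), 2 * ((a - b) / 2), 0),
      ⟨(a - b) / 2, 2 * b - a - c, by omega, by omega, by omega, by omega, by omega, rfl⟩, ?_⟩
    simp [dual, Prod.ext_iff]
    omega

open Classical in
lemma phi_eval (a b c : ℤ) :
    phi (a, b, c) =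
      if (a, b, c) ∈ E3 a then (a + 1, b, c)
      else if (Even (b + c) ∧ (a - 1, b + 1, c) ∉ E3 (a - 1)) ∨
          (¬ Even (b + c) ∧ (a - 1, b, c + 1) ∈ E3 (a - 1)) then (a, b + 1, c)
      else (a, b, c + 1) := rfl

lemma stepA1 (k t : ℤ) (hk : 0 ≤ k) (ht : 0 ≤ t) :
    phi (4 * k + t, 2 * k + t, t) = (4 * k + t + 1, 2 * k + t, t) := by
  rw [phi_eval]
  simp only [Int.even_iff, mem_E3_iff, true_and]
  rw [if_pos (by omega)]

lemma stepA2 (k t : ℤ) :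
    phi (4 * k + t + 1, 2 * k + t, t) = (4 * k + t + 1, 2 * k + t + 1, t) := by
  rw [phi_eval]
  simp only [Int.even_iff, mem_E3_iff, true_and]
  rw [if_neg (by omega), if_pos (by omega)]

lemma stepA3 (k t : ℤ) :
    phi (4 * k + t + 1, 2 * k + t + 1, t) = (4 * k + t + 1, 2 * k + t + 1, t + 1) := by
  rw [phi_eval]
  simp only [Int.even_iff, mem_E3_iff, true_and]
  rw [if_neg (by omega), if_neg (by omega)]

lemma stepB1 (k l t : ℤ) (hk : 0 ≤ k) (hl : 2 ≤ l) (ht : 0 ≤ t) (ht2 : t ≤ l - 2) :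
    phi (4 * k + l, 2 * k + t, t) = (4 * k + l, 2 * k + t + 1, t) := by
  rw [phi_eval]
  simp only [Int.even_iff, mem_E3_iff, true_and]
  rw [if_neg (by omega), if_pos (by omega)]

lemma stepB2 (k l t : ℤ) (ht2 : t ≤ l - 3) :
    phi (4 * k + l, 2 * k + t + 1, t) = (4 * k + l, 2 * k + t + 1, t + 1) := by
  rw [phi_eval]
  simp only [Int.even_iff, mem_E3_iff, true_and]
  rw [if_neg (by omega), if_neg (by omega)]

lemma stepB2' (k l : ℤ) (hk : 0 ≤ k) (hl : 2 ≤ l) :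
    phi (4 * k + l, 2 * k + l - 1, l - 2) = (4 * k + l, 2 * k + l, l - 2) := by
  rw [phi_eval]
  simp only [Int.even_iff, mem_E3_iff, true_and]
  rw [if_neg (by omega), if_pos (by omega)]
  simp only [Prod.mk.injEq, true_and, and_true]
  ring

lemma stepB3 (k l s : ℤ) (hk : 0 ≤ k) (hl : 2 ≤ l) (hs : 0 ≤ s) :
    phi (4 * k + l + s, 2 * k + l + s, l - 2) = (4 * k + l + s + 1, 2 * k + l + s, l - 2) := by
  rw [phi_eval]
  simp only [Int.even_iff, mem_E3_iff, true_and]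
  rw [if_pos (by omega)]

lemma stepB4 (k l s : ℤ) (hk : 0 ≤ k) (hl : 2 ≤ l) (hs : 0 ≤ s) :
    phi (4 * k + l + s + 1, 2 * k + l + s, l - 2) =
      (4 * k + l + s + 1, 2 * k + l + s + 1, l - 2) := by
  rw [phi_eval]
  simp only [Int.even_iff, mem_E3_iff, true_and]
  rw [if_neg (by omega), if_pos (by omega)]

lemma iterA (k : ℤ) (hk : 0 ≤ k) : ∀ s : ℕ,
    phi^[3 * s] (4 * k, 2 * k, 0) = (4 * k + s, 2 * k + s, (s : ℤ)) := by
  intro s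
  induction s with
  | zero => simp
  | succ s ih =>
    rw [show 3 * (s + 1) = 3 * s + 1 + 1 + 1 from by ring, Function.iterate_succ_apply',
      Function.iterate_succ_apply', Function.iterate_succ_apply', ih,
      stepA1 k (s : ℤ) hk (by positivity), stepA2, stepA3]
    simp only [Prod.mk.injEq, true_and, and_true]
    push_cast
    omega

lemma iterB1 (k l : ℤ) (hk : 0 ≤ k) (hl : 2 ≤ l) : ∀ t : ℕ, (t : ℤ) ≤ l - 2 →
    phi^[2 * t] (4 * k + l, 2 * k, 0) = (4 * k + l, 2 * k + t, (t : ℤ)) := by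
  intro t
  induction t with
  | zero => simp
  | succ t ih =>
    intro ht
    have ht' : (t : ℤ) ≤ l - 3 := by push_cast at ht; omega
    rw [show 2 * (t + 1) = 2 * t + 1 + 1 from by ring, Function.iterate_succ_apply',
      Function.iterate_succ_apply', ih (by omega),
      stepB1 k l (t : ℤ) hk hl (by positivity) (by omega), stepB2 k l (t : ℤ) ht']
    simp only [Prod.mk.injEq, true_and, and_true]
    push_cast
    omega

lemma iterB3 (k l : ℤ) (hk : 0 ≤ k) (hl : 2 ≤ l) : ∀ s : ℕ,
    phi^[2 * s] (4 * k + l, 2 * k + l, l - 2) = (4 * k + l + s, 2 * k + l + s, l - 2) := by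
  intro s
  induction s with
  | zero => simp
  | succ s ih =>
    rw [show 2 * (s + 1) = 2 * s + 1 + 1 from by ring, Function.iterate_succ_apply',
      Function.iterate_succ_apply', ih, stepB3 k l (s : ℤ) hk hl (by positivity),
      stepB4 k l (s : ℤ) hk hl (by positivity)]
    simp only [Prod.mk.injEq, true_and, and_true]
    push_cast
    omega

/-- `φ` decomposes `L(3,n)` into saturated chains, of two types:
(i) for `k ≥ 0` with `4k ≤ n`, the chain starting at `(4k, 2k, 0)` stays in
`L(3,n) \ E_{3,n}` for `3(n-4k)` steps and ends at `(n, n-2k, n-4k) ∈ E_{3,n}`;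
(ii) for `k ≥ 0`, `ℓ ≥ 2` with `4k+ℓ ≤ n` and `2(6k+ℓ) ≤ 3n`, the chain starting at
`(4k+ℓ, 2k, 0)` stays in `L(3,n) \ E_{3,n}` for `2(n-4k-1)` steps and ends at
`(n, n-2k, ℓ-2) ∈ E_{3,n}`. -/
theorem phi_chain_decomposition (n : ℤ) (hn : 0 < n) :
    (∀ k : ℤ, 0 ≤ k → 4 * k ≤ n →
      (∀ j : ℕ, (j : ℤ) < 3 * (n - 4 * k) →
        phi^[j] (4 * k, 2 * k, 0) ∈ L3 n \ E3 n) ∧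
      phi^[(3 * (n - 4 * k)).toNat] (4 * k, 2 * k, 0) = (n, n - 2 * k, n - 4 * k) ∧
      ((n, n - 2 * k, n - 4 * k) : ℤ × ℤ × ℤ) ∈ E3 n) ∧
    (∀ k l : ℤ, 0 ≤ k → 2 ≤ l → 4 * k + l ≤ n → 2 * (6 * k + l) ≤ 3 * n →
      (∀ j : ℕ, (j : ℤ) < 2 * (n - 4 * k - 1) →
        phi^[j] (4 * k + l, 2 * k, 0) ∈ L3 n \ E3 n) ∧
      phi^[(2 * (n - 4 * k - 1)).toNat] (4 * k + l, 2 * k, 0) = (n, n - 2 * k, l - 2) ∧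
      ((n, n - 2 * k, l - 2) : ℤ × ℤ × ℤ) ∈ E3 n) := by
  constructor
  · -- chain type (i)
    intro k hk h4k
    obtain ⟨d, hd⟩ : ∃ d : ℕ, (d : ℤ) = n - 4 * k := ⟨(n - 4 * k).toNat, by omega⟩
    refine ⟨?_, ?_, ?_⟩
    · intro j hj
      obtain ⟨q, r, hr, rfl⟩ : ∃ q r, r < 3 ∧ j = r + 3 * q := ⟨j / 3, j % 3, by omega, by omega⟩
      rw [Function.iterate_add_apply, iterA k hk q]
      have hq : (q : ℤ) ≤ n - 4 * k - 1 := by push_cast at hj; omega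
      interval_cases r
      · simp only [Function.iterate_zero, id_eq, Set.mem_diff, L3, Set.mem_setOf_eq,
          mem_E3_iff, true_and]
        refine ⟨⟨by omega, by omega, by omega, by omega⟩, by omega⟩
      · rw [show phi^[1] = phi from rfl, stepA1 k (q : ℤ) hk (by positivity)]
        simp only [Set.mem_diff, L3, Set.mem_setOf_eq, mem_E3_iff, true_and]
        refine ⟨⟨by omega, by omega, by omega, by omega⟩, by omega⟩
      · show phi (phi ((4 * k + (q : ℤ), 2 * k + (q : ℤ), (q : ℤ)) : ℤ × ℤ × ℤ)) ∈ L3 n \ E3 n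
        rw [stepA1 k (q : ℤ) hk (by positivity), stepA2]
        simp only [Set.mem_diff, L3, Set.mem_setOf_eq, mem_E3_iff, true_and]
        refine ⟨⟨by omega, by omega, by omega, by omega⟩, by omega⟩
    · have : (3 * (n - 4 * k)).toNat = 3 * d := by omega
      rw [this, iterA k hk d]
      simp only [Prod.mk.injEq, true_and, and_true]
      omega
    · rw [mem_E3_iff]
      omega
  · -- chain type (ii)
    intro k l hk hl h1 h2
    obtain ⟨e, he⟩ : ∃ e : ℕ, (e : ℤ) = l - 2 := ⟨(l - 2).toNat, by omega⟩
    obtain ⟨d, hd⟩ : ∃ d : ℕ, (d : ℤ) = n - 4 * k - l := ⟨(n - 4 * k - l).toNat, by omega⟩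
    have key1 : phi^[2 * e] (4 * k + l, 2 * k, 0) = (4 * k + l, 2 * k + e, (e : ℤ)) :=
      iterB1 k l hk hl e (by omega)
    have key2 : phi^[2 * e + 1] (4 * k + l, 2 * k, 0) = (4 * k + l, 2 * k + e + 1, (e : ℤ)) := by
      rw [Function.iterate_succ_apply', key1]
      rw [stepB1 k l (e : ℤ) hk hl (by positivity) (by omega)]
    have key3 : phi^[2 * e + 2] (4 * k + l, 2 * k, 0) = (4 * k + l, 2 * k + l, l - 2) := by
      rw [show 2 * e + 2 = (2 * e + 1) + 1 from rfl, Function.iterate_succ_apply', key2]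
      have heq : ((4 * k + l, 2 * k + (e : ℤ) + 1, (e : ℤ)) : ℤ × ℤ × ℤ) =
          (4 * k + l, 2 * k + l - 1, l - 2) := by
        simp only [Prod.mk.injEq, true_and, and_true]; omega
      rw [heq, stepB2' k l hk hl]
    have key4 : ∀ s : ℕ, phi^[2 * e + 2 + 2 * s] (4 * k + l, 2 * k, 0) =
        (4 * k + l + s, 2 * k + l + s, l - 2) := by
      intro s
      rw [show 2 * e + 2 + 2 * s = 2 * s + (2 * e + 2) from by ring,
        Function.iterate_add_apply, key3, iterB3 k l hk hl s]
    refine ⟨?_, ?_, ?_⟩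
    · intro j hj
      have hj' : (j : ℤ) < 2 * e + 2 + 2 * d := by omega
      rcases lt_or_ge j (2 * e + 2) with hcase | hcase
      · -- phase 1
        obtain ⟨t, r, hr, rfl⟩ : ∃ t r, r < 2 ∧ j = r + 2 * t := ⟨j / 2, j % 2, by omega, by omega⟩
        have hte : t ≤ e := by omega
        rw [Function.iterate_add_apply, iterB1 k l hk hl t (by omega)]
        interval_cases r
        · simp only [Function.iterate_zero, id_eq, Set.mem_diff, L3, Set.mem_setOf_eq,
            mem_E3_iff, true_and]
          refine ⟨⟨by omega, by omega, by omega, by omega⟩, by omega⟩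
        · rw [show phi^[1] = phi from rfl, stepB1 k l (t : ℤ) hk hl (by positivity) (by omega)]
          simp only [Set.mem_diff, L3, Set.mem_setOf_eq, mem_E3_iff, true_and]
          refine ⟨⟨by omega, by omega, by omega, by omega⟩, by omega⟩
      · -- phase 2
        obtain ⟨s, r, hr, rfl⟩ : ∃ s r, r < 2 ∧ j = (r + 2 * s) + (2 * e + 2) :=
          ⟨(j - (2 * e + 2)) / 2, (j - (2 * e + 2)) % 2, by omega, by omega⟩
        rw [Function.iterate_add_apply, key3, Function.iterate_add_apply, iterB3 k l hk hl s]
        interval_cases r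
        · simp only [Function.iterate_zero, id_eq, Set.mem_diff, L3, Set.mem_setOf_eq,
            mem_E3_iff, true_and]
          have hs' : (s : ℤ) ≤ n - 4 * k - l - 1 := by push_cast at hj'; omega
          refine ⟨⟨by omega, by omega, by omega, by omega⟩, by omega⟩
        · rw [show phi^[1] = phi from rfl, stepB3 k l (s : ℤ) hk hl (by positivity)]
          have hs' : (s : ℤ) ≤ n - 4 * k - l - 1 := by push_cast at hj'; omega
          simp only [Set.mem_diff, L3, Set.mem_setOf_eq, mem_E3_iff, true_and]
          refine ⟨⟨by omega, by omega, by omega, by omega⟩, by omega⟩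
    · have htot : (2 * (n - 4 * k - 1)).toNat = 2 * e + 2 + 2 * d := by omega
      rw [htot, key4 d]
      simp only [Prod.mk.injEq, true_and, and_true]
      omega
    · rw [mem_E3_iff]
      omega
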